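/- (Moore–Penrose pseudoinverse for Bochner matrices) For every Bochner matrix A ∈ H^{m×n}, there exists a unique linear operator A† : H^m → 𝔽^n satisfying A A† A = A, A† A A† = A†, (A A†)* = A A†, and (A† A)* = A† A (where adjoints are with respect to the ℓ²(H) inner product on H^m and the standard inner product on 𝔽^n). -/

import Mathlib

open scoped BigOperators

section Pinv
variable {𝕜 E F : Type*} [RCLike 𝕜] [NormedAddCommGroup E] [InnerProductSpace 𝕜 E]
  [FiniteDimensional 𝕜 E] [NormedAddCommGroup F] [InnerProductSpace 𝕜 F] [CompleteSpace F]

theorem pinv_exists (T : E →ₗ[𝕜] F) :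
    ∃ B : F →ₗ[𝕜] E,
      (∀ x, T (B (T x)) = T x) ∧ (∀ y, B (T (B y)) = B y) ∧
      (∀ y z, (inner 𝕜 (T (B y)) z : 𝕜) = inner 𝕜 y (T (B z))) ∧
      (∀ x y, (inner 𝕜 (B (T x)) y : 𝕜) = inner 𝕜 x (B (T y))) := by
  set S := LinearMap.range T with hS
  haveI : CompleteSpace S := FiniteDimensional.complete 𝕜 S
  set K := (LinearMap.ker T)ᗮ with hK
  have hTQ : ∀ x : E, T ((K.orthogonalProjection x : E)) = T x := by
    intro x
    have h1 : x - (K.orthogonalProjection x : E) ∈ Kᗮ :=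
      K.sub_starProjection_mem_orthogonal x
    have hKo : Kᗮ = LinearMap.ker T := Submodule.orthogonal_orthogonal (LinearMap.ker T)
    rw [hKo] at h1
    have h2 : T x - T (K.orthogonalProjection x : E) = 0 := by
      rw [← map_sub]; exact LinearMap.mem_ker.mp h1
    have := sub_eq_zero.mp h2
    exact this.symm
  -- the restricted map
  set f : K →ₗ[𝕜] S :=
    LinearMap.codRestrict S (T.domRestrict K) (fun k => LinearMap.mem_range_self T (k : E)) with hf
  have hfval : ∀ k : K, (f k : F) = T (k : E) := fun k => rfl
  have hbij : Function.Bijective f := by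
    constructor
    · intro k₁ k₂ h
      have h' : T ((k₁ : E) - (k₂ : E)) = 0 := by
        rw [map_sub, sub_eq_zero]
        exact congrArg Subtype.val h
      have hd := Submodule.orthogonal_disjoint (LinearMap.ker T)
      have hz : (k₁ : E) - (k₂ : E) = 0 :=
        (Submodule.disjoint_def.mp hd) _ (LinearMap.mem_ker.mpr h') (K.sub_mem k₁.2 k₂.2)
      exact Subtype.ext (sub_eq_zero.mp hz)
    · rintro ⟨y, x, rfl⟩
      exact ⟨K.orthogonalProjection x, Subtype.ext (hTQ x)⟩
  set e : K ≃ₗ[𝕜] S := LinearEquiv.ofBijective f hbij with he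
  have heval : ∀ k : K, ((e k : S) : F) = T (k : E) := fun k => rfl
  set P := S.orthogonalProjection
  set B : F →ₗ[𝕜] E := K.subtype ∘ₗ (e.symm : S →ₗ[𝕜] K) ∘ₗ (P : F →L[𝕜] S).toLinearMap with hBdef
  have hBval : ∀ y : F, B y = ((e.symm (P y) : K) : E) := fun y => rfl
  have hTB : ∀ y : F, T (B y) = (P y : F) := by
    intro y
    rw [hBval]
    have : ((e (e.symm (P y)) : S) : F) = T ((e.symm (P y) : K) : E) := heval _
    rw [e.apply_symm_apply] at this
    exact this.symm
  have hBT : ∀ x : E, B (T x) = ((K.orthogonalProjection x : K) : E) := by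
    intro x
    rw [hBval]
    have hPT : P (T x) = ⟨T x, LinearMap.mem_range_self T x⟩ :=
      Submodule.orthogonalProjection_mem_subspace_eq_self (⟨T x, LinearMap.mem_range_self T x⟩ : S)
    rw [hPT]
    congr 1
    apply e.injective
    rw [e.apply_symm_apply]
    exact Subtype.ext (hTQ x).symm
  refine ⟨B, ?_, ?_, ?_, ?_⟩
  · intro x
    rw [hBT x]
    exact hTQ x
  · intro y
    have : B ((P y : F)) = B y := by
      rw [hBval, hBval]
      congr 2
      exact Submodule.orthogonalProjection_mem_subspace_eq_self (P y)
    rw [hTB, this]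
  · intro y z
    rw [hTB, hTB]
    exact S.inner_starProjection_left_eq_right y z
  · intro x y
    rw [hBT, hBT]
    exact K.inner_starProjection_left_eq_right x y

omit [FiniteDimensional 𝕜 E] [CompleteSpace F] in
theorem pinv_unique (T : E →ₗ[𝕜] F) (B C : F →ₗ[𝕜] E)
    (hB1 : ∀ x, T (B (T x)) = T x) (hB2 : ∀ y, B (T (B y)) = B y)
    (hB3 : ∀ y z, (inner 𝕜 (T (B y)) z : 𝕜) = inner 𝕜 y (T (B z)))
    (hB4 : ∀ x y, (inner 𝕜 (B (T x)) y : 𝕜) = inner 𝕜 x (B (T y)))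
    (hC1 : ∀ x, T (C (T x)) = T x) (hC2 : ∀ y, C (T (C y)) = C y)
    (hC3 : ∀ y z, (inner 𝕜 (T (C y)) z : 𝕜) = inner 𝕜 y (T (C z)))
    (hC4 : ∀ x y, (inner 𝕜 (C (T x)) y : 𝕜) = inner 𝕜 x (C (T y))) :
    B = C := by
  have claim1 : ∀ y : F, T (B y) = T (C y) := by
    intro y
    apply ext_inner_right 𝕜
    intro z
    calc (inner 𝕜 (T (B y)) z : 𝕜) = inner 𝕜 y (T (B z)) := hB3 y z
      _ = inner 𝕜 y (T (C (T (B z)))) := by rw [hC1]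
      _ = inner 𝕜 (T (C y)) (T (B z)) := (hC3 y (T (B z))).symm
      _ = inner 𝕜 (T (B (T (C y)))) z := (hB3 (T (C y)) z).symm
      _ = inner 𝕜 (T (C y)) z := by rw [hB1]
  have claim2 : ∀ x : E, B (T x) = C (T x) := by
    intro x
    apply ext_inner_right 𝕜
    intro w
    calc (inner 𝕜 (B (T x)) w : 𝕜) = inner 𝕜 x (B (T w)) := hB4 x w
      _ = inner 𝕜 x (B (T (C (T w)))) := by rw [hC1]
      _ = inner 𝕜 (B (T x)) (C (T w)) := (hB4 x (C (T w))).symm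
      _ = inner 𝕜 (C (T (B (T x)))) w := (hC4 (B (T x)) w).symm
      _ = inner 𝕜 (C (T x)) w := by rw [hB1]
  ext y
  calc B y = B (T (B y)) := (hB2 y).symm
    _ = B (T (C y)) := by rw [claim1]
    _ = C (T (C y)) := claim2 (C y)
    _ = C y := hC2 y

end Pinv

noncomputable def bmul {𝕜 H : Type*} [RCLike 𝕜] [NormedAddCommGroup H]
    [InnerProductSpace 𝕜 H] {m : ℕ} {ι : Type*} [Fintype ι]
    (A : Fin m → ι → H) : (ι → 𝕜) →ₗ[𝕜] (Fin m → H) where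
  toFun x := fun i => ∑ j, x j • A i j
  map_add' x y := by
    funext i
    simp [add_smul, Finset.sum_add_distrib]
  map_smul' c x := by
    funext i
    simp [smul_smul, Finset.smul_sum]

/-- The column rank of a Bochner matrix: the dimension of the image of `x ↦ A·x`. -/
noncomputable def crank (𝕜 : Type*) {H : Type*} [RCLike 𝕜] [NormedAddCommGroup H]
    [InnerProductSpace 𝕜 H] {m : ℕ} {ι : Type*} [Fintype ι]
    (A : Fin m → ι → H) : ℕ :=
  Module.finrank 𝕜 (LinearMap.range (bmul (𝕜 := 𝕜) A))

/-- Moore–Penrose pseudoinverse for Bochner matrices: for every `A ∈ H^{m×n}`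
there is a unique linear operator `B = A† : H^m → 𝔽^n` with `A B A = A`,
`B A B = B`, and both `A B` and `B A` self-adjoint (for the `ℓ²(H)` inner
product on `H^m` and the standard inner product on `𝔽^n`). -/
theorem bochner_moore_penrose {𝕜 H : Type*} [RCLike 𝕜]
    [NormedAddCommGroup H] [InnerProductSpace 𝕜 H] [CompleteSpace H]
    {m n : ℕ} (A : Fin m → Fin n → H) :
    ∃! B : (Fin m → H) →ₗ[𝕜] (Fin n → 𝕜),
      (∀ x : Fin n → 𝕜, bmul (𝕜 := 𝕜) A (B (bmul (𝕜 := 𝕜) A x)) = bmul (𝕜 := 𝕜) A x) ∧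
      (∀ y : Fin m → H, B (bmul (𝕜 := 𝕜) A (B y)) = B y) ∧
      (∀ y z : Fin m → H,
        (∑ i, inner (𝕜 := 𝕜) (bmul (𝕜 := 𝕜) A (B y) i) (z i)) =
          ∑ i, inner (𝕜 := 𝕜) (y i) (bmul (𝕜 := 𝕜) A (B z) i)) ∧
      (∀ x y : Fin n → 𝕜,
        (∑ j, (starRingEnd 𝕜) (B (bmul (𝕜 := 𝕜) A x) j) * y j) =
          ∑ j, (starRingEnd 𝕜) (x j) * B (bmul (𝕜 := 𝕜) A y) j) := by
  haveI : CompleteSpace (PiLp 2 fun _ : Fin m => H) := inferInstance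
  set eE := WithLp.linearEquiv 2 𝕜 (Fin n → 𝕜)
  set eF := WithLp.linearEquiv 2 𝕜 (Fin m → H)
  set T : EuclideanSpace 𝕜 (Fin n) →ₗ[𝕜] PiLp 2 (fun _ : Fin m => H) :=
    eF.symm.toLinearMap ∘ₗ bmul (𝕜 := 𝕜) A ∘ₗ eE.toLinearMap
  obtain ⟨B0, h1, h2, h3, h4⟩ := pinv_exists (𝕜 := 𝕜) T
  refine ⟨eE.toLinearMap ∘ₗ B0 ∘ₗ eF.symm.toLinearMap,
    ⟨fun x => congrArg WithLp.ofLp (h1 (WithLp.toLp 2 x)),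
     fun y => congrArg WithLp.ofLp (h2 (WithLp.toLp 2 y)), ?_, ?_⟩, ?_⟩
  · intro y z
    have h := h3 (WithLp.toLp 2 y) (WithLp.toLp 2 z)
    rw [PiLp.inner_apply, PiLp.inner_apply] at h
    exact h
  · intro x y
    have h := h4 (WithLp.toLp 2 x) (WithLp.toLp 2 y)
    simp only [PiLp.inner_apply, RCLike.inner_apply'] at h
    exact h
  · rintro B' ⟨g1, g2, g3, g4⟩
    have hEq := pinv_unique (𝕜 := 𝕜) T (eE.symm.toLinearMap ∘ₗ B' ∘ₗ eF.toLinearMap) B0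
      (fun x => congrArg (WithLp.toLp 2) (g1 (WithLp.ofLp x)))
      (fun y => congrArg (WithLp.toLp 2) (g2 (WithLp.ofLp y))) ?_ ?_ h1 h2 h3 h4
    · exact LinearMap.ext fun y => congrArg WithLp.ofLp (LinearMap.congr_fun hEq (WithLp.toLp 2 y))
    · intro y z
      rw [PiLp.inner_apply, PiLp.inner_apply]
      exact g3 (WithLp.ofLp y) (WithLp.ofLp z)
    · intro x y
      simp only [PiLp.inner_apply, RCLike.inner_apply']
      exact g4 (WithLp.ofLp x) (WithLp.ofLp y)
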